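/- Let a ∈ ℝ, let I ⊆ ℝ be an interval containing 0, and let y, z : ℝ → ℝ be twice differentiable on I with y''(s) = (1 − 2·y(s)² − 8·z(s)²)·y(s), z''(s) = (4 − 2·y(s)² − 8·z(s)²)·z(s) on I, and y(0) = 0, y'(0) = 2a, z(0) = a, z'(0) = 0. Assume moreover y(s)² + z(s)² < 1 for all s ∈ I, and define x(s) = √(1 − y(s)² − z(s)²). Then x is twice differentiable on I and satisfies x''(s) = −2·(y(s)² + 4·z(s)²)·x(s) for all s ∈ I. -/

import Mathlib

/-- **Second-order equation for `x = √(1 − y² − z²)`.**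
If `y, z` solve the EGJ system on an interval `I ∋ 0` with the EGJ initial data and
`y² + z² < 1` on `I`, then `x = √(1 − y² − z²)` is twice differentiable on `I` and
satisfies `x'' = −2(y² + 4z²)·x` on `I`. -/
theorem egj_x_second_order_ode
    (a : ℝ) (I : Set ℝ) (hI : I.OrdConnected) (h0 : (0 : ℝ) ∈ I)
    (y z y' z' y'' z'' : ℝ → ℝ)
    (hy : ∀ s ∈ I, HasDerivAt y (y' s) s)
    (hy' : ∀ s ∈ I, HasDerivAt y' (y'' s) s)
    (hz : ∀ s ∈ I, HasDerivAt z (z' s) s)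
    (hz' : ∀ s ∈ I, HasDerivAt z' (z'' s) s)
    (hODEy : ∀ s ∈ I, y'' s = (1 - 2 * (y s) ^ 2 - 8 * (z s) ^ 2) * y s)
    (hODEz : ∀ s ∈ I, z'' s = (4 - 2 * (y s) ^ 2 - 8 * (z s) ^ 2) * z s)
    (hy0 : y 0 = 0) (hy'0 : y' 0 = 2 * a) (hz0 : z 0 = a) (hz'0 : z' 0 = 0)
    (hlt : ∀ s ∈ I, (y s) ^ 2 + (z s) ^ 2 < 1)
    (x : ℝ → ℝ) (hx : ∀ s, x s = Real.sqrt (1 - (y s) ^ 2 - (z s) ^ 2)) :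
    ∃ x' x'' : ℝ → ℝ,
      (∀ s ∈ I, HasDerivAt x (x' s) s) ∧
      (∀ s ∈ I, HasDerivAt x' (x'' s) s) ∧
      ∀ s ∈ I, x'' s = -2 * ((y s) ^ 2 + 4 * (z s) ^ 2) * x s := by
  have hconv : Convex ℝ I := hI.convex
  -- positivity of u = 1 - y² - z² on I
  have hu : ∀ s ∈ I, (0:ℝ) < 1 - (y s) ^ 2 - (z s) ^ 2 := fun s hs => by
    have := hlt s hs; linarith
  have hX : ∀ s ∈ I, (0:ℝ) < x s := fun s hs => by
    rw [hx s]; exact Real.sqrt_pos.mpr (hu s hs)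
  have hXsq : ∀ s ∈ I, (x s) ^ 2 = 1 - (y s) ^ 2 - (z s) ^ 2 := fun s hs => by
    rw [hx s, Real.sq_sqrt (le_of_lt (hu s hs))]
  -- the conserved quantity K
  set K : ℝ → ℝ := fun s =>
    (y' s) ^ 2 + (z' s) ^ 2 - (y s * z' s - z s * y' s) ^ 2
      - ((y s) ^ 2 + 4 * (z s) ^ 2) * (1 - (y s) ^ 2 - (z s) ^ 2) with hKdef
  have hKderiv : ∀ s ∈ I, HasDerivAt K 0 s := by
    intro s hs
    have h1 :=
      ((((hy' s hs).pow 2).add ((hz' s hs).pow 2)).sub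
        ((((hy s hs).mul (hz' s hs)).sub ((hz s hs).mul (hy' s hs))).pow 2)).sub
        (((((hy s hs).pow 2).add (((hz s hs).pow 2).const_mul 4))).mul
          (((hasDerivAt_const s (1:ℝ)).sub ((hy s hs).pow 2)).sub ((hz s hs).pow 2)))
    refine h1.congr_deriv (Eq.symm ?_)
    rw [hODEy s hs, hODEz s hs]
    simp only [Pi.add_apply, Pi.sub_apply, Pi.mul_apply, Pi.pow_apply]
    ring
  have hK0 : K 0 = 0 := by
    simp only [hKdef, hy0, hy'0, hz0, hz'0]; ring
  have hKzero : ∀ s ∈ I, K s = 0 := by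
    intro s hs
    have := hconv.norm_image_sub_le_of_norm_hasDerivWithin_le
      (C := 0) (f' := fun _ => (0:ℝ))
      (fun t ht => (hKderiv t ht).hasDerivWithinAt)
      (fun t _ => by simp) h0 hs
    simp only [Real.norm_eq_abs, zero_mul] at this
    have : K s - K 0 = 0 := by
      have h2 : |K s - K 0| ≤ 0 := this
      exact abs_eq_zero.mp (le_antisymm h2 (abs_nonneg _))
    linarith [hK0]
  -- definitions of x' and x''
  refine ⟨fun s => -(y s * y' s + z s * z' s) / Real.sqrt (1 - (y s) ^ 2 - (z s) ^ 2),
          fun s => -2 * ((y s) ^ 2 + 4 * (z s) ^ 2) * x s, ?_, ?_, fun s _ => rfl⟩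
  · -- first derivative
    intro s hs
    have hsq : HasDerivAt (fun t => 1 - (y t) ^ 2 - (z t) ^ 2)
        (0 - 2 * y s ^ 1 * y' s - 2 * z s ^ 1 * z' s) s :=
      ((hasDerivAt_const s (1:ℝ)).sub ((hy s hs).pow 2)).sub ((hz s hs).pow 2)
    have hne : (1 - (y s) ^ 2 - (z s) ^ 2) ≠ 0 := ne_of_gt (hu s hs)
    have h2 := hsq.sqrt hne
    have hxfun : x = fun t => Real.sqrt (1 - (y t) ^ 2 - (z t) ^ 2) := funext hx
    rw [hxfun]
    convert h2 using 1
    have hsne : Real.sqrt (1 - (y s) ^ 2 - (z s) ^ 2) ≠ 0 :=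
      ne_of_gt (Real.sqrt_pos.mpr (hu s hs))
    field_simp
    ring
  · -- second derivative
    intro s hs
    have hN : HasDerivAt (fun t => -(y t * y' t + z t * z' t))
        (-(y' s * y' s + y s * y'' s + (z' s * z' s + z s * z'' s))) s :=
      (((hy s hs).mul (hy' s hs)).add ((hz s hs).mul (hz' s hs))).neg
    have hsq : HasDerivAt (fun t => 1 - (y t) ^ 2 - (z t) ^ 2)
        (0 - 2 * y s ^ 1 * y' s - 2 * z s ^ 1 * z' s) s :=
      ((hasDerivAt_const s (1:ℝ)).sub ((hy s hs).pow 2)).sub ((hz s hs).pow 2)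
    have hne : (1 - (y s) ^ 2 - (z s) ^ 2) ≠ 0 := ne_of_gt (hu s hs)
    have hD := hsq.sqrt hne
    have hsne : Real.sqrt (1 - (y s) ^ 2 - (z s) ^ 2) ≠ 0 :=
      ne_of_gt (Real.sqrt_pos.mpr (hu s hs))
    have h3 := hN.div hD hsne
    refine h3.congr_deriv (Eq.symm ?_)
    -- now an algebraic identity; let X = sqrt(u s)
    set X := Real.sqrt (1 - (y s) ^ 2 - (z s) ^ 2) with hXdef
    have hX2 : X ^ 2 = 1 - (y s) ^ 2 - (z s) ^ 2 := Real.sq_sqrt (le_of_lt (hu s hs))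
    have hxX : x s = X := hx s
    simp only [hxX, hODEy s hs, hODEz s hs]
    have hKs := hKzero s hs
    simp only [hKdef] at hKs
    have h4 : X ^ 4 = (1 - y s ^ 2 - z s ^ 2) ^ 2 := by rw [← hX2]; ring
    field_simp
    linear_combination (-4 * (y s ^ 2 + 4 * z s ^ 2)) * h4 +
      2 * (y' s ^ 2 + z' s ^ 2 + y s ^ 2 * (1 - 2 * y s ^ 2 - 8 * z s ^ 2)
        + z s ^ 2 * (4 - 2 * y s ^ 2 - 8 * z s ^ 2)) * hX2 + 2 * hKs
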